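/- Define J : 𝔞(h,𝒜) → B(ℂ ⊕ h ⊕ ℂ) by J(α,x,y,A)(γ ⊕ u ⊕ δ) = (y(u) + αδ) ⊕ (Au + δx) ⊕ 0, and let G ∈ B(ℂ ⊕ h ⊕ ℂ) be the flip G(γ ⊕ u ⊕ δ) = δ ⊕ u ⊕ γ. Then J is an injective linear map which is multiplicative, J(ab) = J(a)J(b) for all a, b ∈ 𝔞(h,𝒜), and the involution is implemented by the pseudo-Euclidean metric G: J(a⋆) = G ∘ J(a)† ∘ G, where J(a)† is the Hilbert-space adjoint of J(a). -/

import Mathlib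

/-!
Vacuum Itô algebra: the fundamental pseudo-Euclidean representation (Statement 2).
-/

open scoped ComplexOrder

noncomputable section

/-- The underlying space of the vacuum Itô algebra `𝔞(h,𝒜)`: quadruples
`(α, x, y, A)` with `α ∈ ℂ`, a ket `x ∈ h`, a bra `y ∈ h*` (a continuous linear
functional) and `A` in the *-subalgebra `𝒜 ⊆ B(h)`. -/
abbrev VacuumIto (H : Type*) [NormedAddCommGroup H] [InnerProductSpace ℂ H]
    [CompleteSpace H] (𝒜 : NonUnitalStarSubalgebra ℂ (H →L[ℂ] H)) :=
  ℂ × H × (H →L[ℂ] ℂ) × 𝒜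

variable {H : Type*} [NormedAddCommGroup H] [InnerProductSpace ℂ H] [CompleteSpace H]
  {𝒜 : NonUnitalStarSubalgebra ℂ (H →L[ℂ] H)}

/-- The product `(α₁,x₁,y₁,A₁)·(α₂,x₂,y₂,A₂) = (y₁(x₂), A₁x₂, y₁∘A₂, A₁A₂)`. -/
def vprod (a b : VacuumIto H 𝒜) : VacuumIto H 𝒜 :=
  ⟨a.2.2.1 b.2.1, (a.2.2.2 : H →L[ℂ] H) b.2.1,
    a.2.2.1.comp (b.2.2.2 : H →L[ℂ] H), a.2.2.2 * b.2.2.2⟩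

/-- The involution `(α,x,y,A)⋆ = (conj α, y♯, x♭, A†)`, where `y♯` is the Riesz
representative of the bra `y` and `x♭ = ⟨x|·⟩`. -/
def vstar (a : VacuumIto H 𝒜) : VacuumIto H 𝒜 :=
  ⟨starRingEnd ℂ a.1, (InnerProductSpace.toDual ℂ H).symm a.2.2.1,
    (InnerProductSpace.toDual ℂ H a.2.1 : H →L[ℂ] ℂ), star a.2.2.2⟩

/-- The death `θ = (1,0,0,0)`. -/
def vtheta : VacuumIto H 𝒜 := ⟨1, 0, 0, 0⟩

/-- The functional `l(α,x,y,A) = α`. -/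
def vl (a : VacuumIto H 𝒜) : ℂ := a.1

variable (H 𝒜)

/-- The pseudo-Euclidean space `𝒦 = ℂ ⊕ h ⊕ ℂ` (with its Hilbert `ℓ²`-structure). -/
abbrev PseudoSpace := WithLp 2 (ℂ × WithLp 2 (H × ℂ))

/-- First coordinate `γ` of `γ ⊕ u ⊕ δ`. -/
def prGamma : PseudoSpace H →L[ℂ] ℂ :=
  (ContinuousLinearMap.fst ℂ ℂ (WithLp 2 (H × ℂ))).comp
    (WithLp.prodContinuousLinearEquiv 2 ℂ ℂ (WithLp 2 (H × ℂ))).toContinuousLinearMap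

/-- Middle coordinate `u` of `γ ⊕ u ⊕ δ`. -/
def prU : PseudoSpace H →L[ℂ] H :=
  ((ContinuousLinearMap.fst ℂ H ℂ).comp
      (WithLp.prodContinuousLinearEquiv 2 ℂ H ℂ).toContinuousLinearMap).comp
    (((ContinuousLinearMap.snd ℂ ℂ (WithLp 2 (H × ℂ)))).comp
      (WithLp.prodContinuousLinearEquiv 2 ℂ ℂ (WithLp 2 (H × ℂ))).toContinuousLinearMap)

/-- Last coordinate `δ` of `γ ⊕ u ⊕ δ`. -/
def prDelta : PseudoSpace H →L[ℂ] ℂ :=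
  ((ContinuousLinearMap.snd ℂ H ℂ).comp
      (WithLp.prodContinuousLinearEquiv 2 ℂ H ℂ).toContinuousLinearMap).comp
    (((ContinuousLinearMap.snd ℂ ℂ (WithLp 2 (H × ℂ)))).comp
      (WithLp.prodContinuousLinearEquiv 2 ℂ ℂ (WithLp 2 (H × ℂ))).toContinuousLinearMap)

/-- Reassembling `(γ, u, δ)` into an element of `𝒦`. -/
def reassemble (f : PseudoSpace H →L[ℂ] ℂ) (g : PseudoSpace H →L[ℂ] H)
    (k : PseudoSpace H →L[ℂ] ℂ) : PseudoSpace H →L[ℂ] PseudoSpace H :=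
  ((WithLp.prodContinuousLinearEquiv 2 ℂ ℂ (WithLp 2 (H × ℂ))).symm.toContinuousLinearMap).comp
    (f.prod
      (((WithLp.prodContinuousLinearEquiv 2 ℂ H ℂ).symm.toContinuousLinearMap).comp (g.prod k)))

/-- The fundamental representation
`J(α,x,y,A)(γ ⊕ u ⊕ δ) = (y(u) + αδ) ⊕ (Au + δx) ⊕ 0`. -/
def Jrep (a : VacuumIto H 𝒜) : PseudoSpace H →L[ℂ] PseudoSpace H :=
  reassemble H (a.2.2.1.comp (prU H) + a.1 • prDelta H)
    (((a.2.2.2 : H →L[ℂ] H)).comp (prU H) + (prDelta H).smulRight a.2.1) 0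

/-- The pseudo-Euclidean metric (flip) `G(γ ⊕ u ⊕ δ) = δ ⊕ u ⊕ γ`. -/
def Gflip : PseudoSpace H →L[ℂ] PseudoSpace H :=
  reassemble H (prDelta H) (prU H) (prGamma H)


set_option linter.unusedSectionVars false

variable {H 𝒜}

/-- Auxiliary: building a vector of `𝒦` from coordinates. -/
def mkv (γ : ℂ) (u : H) (δ : ℂ) : PseudoSpace H :=
  (WithLp.equiv 2 _).symm (γ, (WithLp.equiv 2 _).symm (u, δ))

lemma prGamma_mkv (γ : ℂ) (u : H) (δ : ℂ) : prGamma H (mkv γ u δ) = γ := rfl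
lemma prU_mkv (γ : ℂ) (u : H) (δ : ℂ) : prU H (mkv γ u δ) = u := rfl
lemma prDelta_mkv (γ : ℂ) (u : H) (δ : ℂ) : prDelta H (mkv γ u δ) = δ := rfl

lemma pseudo_ext {v w : PseudoSpace H} (h1 : prGamma H v = prGamma H w)
    (h2 : prU H v = prU H w) (h3 : prDelta H v = prDelta H w) : v = w := by
  apply (WithLp.equiv 2 _).injective
  refine Prod.ext h1 ?_
  exact congrArg (WithLp.equiv 2 _).symm (Prod.ext h2 h3)

lemma prGamma_Jrep (a : VacuumIto H 𝒜) (v : PseudoSpace H) :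
    prGamma H (Jrep H 𝒜 a v) = a.2.2.1 (prU H v) + a.1 * prDelta H v := rfl
lemma prU_Jrep (a : VacuumIto H 𝒜) (v : PseudoSpace H) :
    prU H (Jrep H 𝒜 a v) = (a.2.2.2 : H →L[ℂ] H) (prU H v) + prDelta H v • a.2.1 := rfl
lemma prDelta_Jrep (a : VacuumIto H 𝒜) (v : PseudoSpace H) :
    prDelta H (Jrep H 𝒜 a v) = 0 := rfl

lemma prGamma_G (v : PseudoSpace H) : prGamma H (Gflip H v) = prDelta H v := rfl
lemma prU_G (v : PseudoSpace H) : prU H (Gflip H v) = prU H v := rfl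
lemma prDelta_G (v : PseudoSpace H) : prDelta H (Gflip H v) = prGamma H v := rfl

lemma Gflip_Gflip (v : PseudoSpace H) : Gflip H (Gflip H v) = v :=
  pseudo_ext rfl rfl rfl

lemma prGamma_eq (v : PseudoSpace H) : prGamma H v = v.ofLp.1 := rfl
lemma prU_eq (v : PseudoSpace H) : prU H v = v.ofLp.2.ofLp.1 := rfl
lemma prDelta_eq (v : PseudoSpace H) : prDelta H v = v.ofLp.2.ofLp.2 := rfl

lemma pseudo_inner (v w : PseudoSpace H) :
    (inner ℂ v w : ℂ) = (starRingEnd ℂ) (prGamma H v) * prGamma H w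
      + inner ℂ (prU H v) (prU H w) + (starRingEnd ℂ) (prDelta H v) * prDelta H w := by
  rw [WithLp.prod_inner_apply, WithLp.prod_inner_apply, prGamma_eq, prU_eq, prDelta_eq,
    prGamma_eq, prU_eq, prDelta_eq, RCLike.inner_apply, RCLike.inner_apply]
  ring



variable (H 𝒜)

/-- `J` is an injective linear multiplicative map and the
involution of the vacuum Itô algebra is implemented by the pseudo-Euclidean

metric `G`: `J(a⋆) = G ∘ J(a)† ∘ G`. -/
theorem vacuumIto_fundamental_representation
    (H : Type*) [NormedAddCommGroup H] [InnerProductSpace ℂ H] [CompleteSpace H]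
    (𝒜 : NonUnitalStarSubalgebra ℂ (H →L[ℂ] H)) :
    Function.Injective (Jrep H 𝒜) ∧
    IsLinearMap ℂ (Jrep H 𝒜) ∧
    (∀ a b : VacuumIto H 𝒜, Jrep H 𝒜 (vprod a b) = (Jrep H 𝒜 a).comp (Jrep H 𝒜 b)) ∧
    (∀ a : VacuumIto H 𝒜,
      Jrep H 𝒜 (vstar a)
        = (Gflip H).comp ((ContinuousLinearMap.adjoint (Jrep H 𝒜 a)).comp (Gflip H))) := by
  refine ⟨?_, ?_, ?_, ?_⟩
  · -- injectivity
    intro a b hab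
    have key : ∀ v, Jrep H 𝒜 a v = Jrep H 𝒜 b v := fun v => congrFun (congrArg _ hab) v
    obtain ⟨α₁, x₁, y₁, A₁⟩ := a
    obtain ⟨α₂, x₂, y₂, A₂⟩ := b
    have hα : α₁ = α₂ := by
      have := congrArg (prGamma H) (key (mkv 0 0 1))
      simpa [prGamma_Jrep, prU_mkv, prDelta_mkv] using this
    have hx : x₁ = x₂ := by
      have := congrArg (prU H) (key (mkv 0 0 1))
      simpa [prU_Jrep, prU_mkv, prDelta_mkv] using this
    have hy : y₁ = y₂ := by
      refine ContinuousLinearMap.ext fun u => ?_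
      have := congrArg (prGamma H) (key (mkv 0 u 0))
      simpa [prGamma_Jrep, prU_mkv, prDelta_mkv] using this
    have hA : A₁ = A₂ := by
      refine Subtype.ext (ContinuousLinearMap.ext fun u => ?_)
      have := congrArg (prU H) (key (mkv 0 u 0))
      simpa [prU_Jrep, prU_mkv, prDelta_mkv] using this
    rw [hα, hx, hy, hA]
  · -- linearity
    refine ⟨fun a b => ?_, fun c a => ?_⟩ <;>
    · refine ContinuousLinearMap.ext fun v => pseudo_ext ?_ ?_ ?_ <;>
      · simp [prGamma_Jrep, prU_Jrep, prDelta_Jrep, smul_add, smul_smul, mul_add,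
          add_mul, mul_comm, mul_left_comm]
        try ring
        try abel
  · -- multiplicativity
    intro a b
    refine ContinuousLinearMap.ext fun v => pseudo_ext ?_ ?_ ?_ <;>
    · simp [vprod, prGamma_Jrep, prU_Jrep, prDelta_Jrep, map_add, map_smul, smul_add,
        smul_smul, mul_comm, mul_left_comm]
      try ring
      try abel
  · -- the involution is implemented by G
    intro a
    have key : (Gflip H).comp ((Jrep H 𝒜 (vstar a)).comp (Gflip H))
        = ContinuousLinearMap.adjoint (Jrep H 𝒜 a) := by
      rw [ContinuousLinearMap.eq_adjoint_iff]
      intro v w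
      simp only [ContinuousLinearMap.comp_apply]
      rw [pseudo_inner, pseudo_inner]
      simp only [prGamma_Jrep, prU_Jrep, prDelta_Jrep, prGamma_G, prU_G, prDelta_G]
      simp only [vstar, inner_add_left, inner_add_right, inner_smul_left, inner_smul_right,
        InnerProductSpace.toDual_symm_apply, InnerProductSpace.toDual_apply_apply,
        map_add, map_mul, map_zero, mul_zero, add_zero, zero_add,
        Complex.conj_conj, inner_conj_symm]
      have hst : ((star a.2.2.2 : 𝒜) : H →L[ℂ] H)
          = ContinuousLinearMap.adjoint (a.2.2.2 : H →L[ℂ] H) := by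
        rw [← ContinuousLinearMap.star_eq_adjoint]; rfl
      rw [hst, ContinuousLinearMap.adjoint_inner_left]
      ring
    rw [← key]
    refine ContinuousLinearMap.ext fun v => ?_
    simp only [ContinuousLinearMap.comp_apply, Gflip_Gflip]


end
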